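/- Let p be a prime, let S ⊆ ℤ/pℤ be a nonempty subset with |S| ≤ p/2, and let a ∈ ℤ/pℤ be nonzero. Then |Ŝ(a)| ≤ sin(π|S|/p) / sin(π/p), where Ŝ denotes the Fourier transform of the indicator function of S; equality is attained when S is an arithmetic progression of common difference a⁻¹ (equivalently, when a·S is an interval of consecutive residues). -/

import Mathlib

set_option maxHeartbeats 1000000
open Finset

local notation "π" => Real.pi

lemma abs_exp_sub_one (t : ℝ) :
    ‖Complex.exp ((t:ℂ) * Complex.I) - 1‖ = 2 * |Real.sin (t/2)| := by
  have h : Complex.exp ((t:ℂ) * Complex.I) - 1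
      = ((Real.cos t - 1 : ℝ) : ℂ) + ((Real.sin t : ℝ) : ℂ) * Complex.I := by
    rw [Complex.exp_mul_I]
    push_cast [Complex.ofReal_cos, Complex.ofReal_sin]
    ring
  rw [h, Complex.norm_add_mul_I]
  have h2 : (Real.cos t - 1)^2 + Real.sin t ^2 = (2 * |Real.sin (t/2)|)^2 := by
    have h3 : Real.cos t = 1 - 2 * Real.sin (t/2)^2 := by
      have h4 := Real.sin_sq_add_cos_sq (t/2)
      have h5 : Real.cos (2*(t/2)) = 2 * Real.cos (t/2)^2 - 1 := Real.cos_two_mul (t/2)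
      rw [show 2*(t/2) = t by ring] at h5
      nlinarith
    have := Real.sin_sq_add_cos_sq t
    have h5 : |Real.sin (t/2)|^2 = Real.sin (t/2)^2 := sq_abs _
    nlinarith
  rw [h2, Real.sqrt_sq (by positivity)]

lemma geom_abs (p M : ℕ) (hp : 2 ≤ p) (hM : M ≤ p) :
    ‖∑ i ∈ Finset.range M, Complex.exp ((2*π*i/p : ℝ) * Complex.I)‖
      = Real.sin (π*M/p) / Real.sin (π/p) := by
  have hp0 : (0:ℝ) < p := by positivity
  have hπ : (0:ℝ) < π := Real.pi_pos
  set z : ℂ := Complex.exp ((2*π/p : ℝ) * Complex.I) with hz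
  have hterm : ∀ i : ℕ, Complex.exp ((2*π*i/p : ℝ) * Complex.I) = z ^ i := by
    intro i
    rw [hz, ← Complex.exp_nat_mul]
    congr 1
    push_cast
    ring
  have hz1 : z ≠ 1 := by
    rw [hz, Ne, Complex.exp_eq_one_iff]
    rintro ⟨n, hn⟩
    have him := congrArg Complex.im hn
    simp [Complex.ofReal_mul] at him
    have hnp : (n:ℝ) * p = 1 := by
      field_simp at him
      nlinarith [him]
    have hp2 : (2:ℝ) ≤ p := by exact_mod_cast hp
    rcases le_or_gt n 0 with h | h
    · have hr : (n:ℝ) ≤ 0 := by exact_mod_cast h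
      nlinarith
    · have hr : (1:ℝ) ≤ (n:ℝ) := by exact_mod_cast h
      nlinarith
  have hsum : ∑ i ∈ Finset.range M, Complex.exp ((2*π*i/p : ℝ) * Complex.I)
      = (z ^ M - 1)/(z - 1) := by
    rw [Finset.sum_congr rfl (fun i _ => hterm i)]
    exact geom_sum_eq hz1 M
  have hzM : z ^ M = Complex.exp ((2*π*M/p : ℝ) * Complex.I) := by
    rw [hz, ← Complex.exp_nat_mul]
    congr 1
    push_cast
    ring
  rw [hsum, norm_div, hzM]
  have h1 : ‖Complex.exp ((2*π*(M:ℝ)/p : ℝ) * Complex.I) - 1‖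
      = 2 * |Real.sin (π*M/p)| := by
    rw [abs_exp_sub_one, show (2*π*(M:ℝ)/p)/2 = π*(M:ℝ)/p from by ring]
  have h2 : ‖z - 1‖ = 2 * |Real.sin (π/p)| := by
    rw [hz, abs_exp_sub_one, show (2*π/(p:ℝ))/2 = π/(p:ℝ) from by ring]
  rw [h1, h2]
  have hs1 : |Real.sin (π*M/p)| = Real.sin (π*M/p) := by
    rw [abs_of_nonneg]
    apply Real.sin_nonneg_of_nonneg_of_le_pi
    · positivity
    · rw [div_le_iff₀ hp0]
      have : (M:ℝ) ≤ p := by exact_mod_cast hM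
      nlinarith
  have hp2 : (2:ℝ) ≤ p := by exact_mod_cast hp
  have hs2 : |Real.sin (π/p)| = Real.sin (π/p) := by
    rw [abs_of_nonneg]
    apply Real.sin_nonneg_of_nonneg_of_le_pi
    · positivity
    · rw [div_le_iff₀ hp0]
      nlinarith
  rw [hs1, hs2]
  ring

lemma sin_p_pos (p : ℕ) (hp : 2 ≤ p) : 0 < Real.sin (π/p) := by
  have hp0 : (0:ℝ) < p := by positivity
  have hπ : (0:ℝ) < π := Real.pi_pos
  apply Real.sin_pos_of_pos_of_lt_pi
  · positivity
  · rw [div_lt_iff₀ hp0]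
    have : (2:ℝ) ≤ p := by exact_mod_cast hp
    nlinarith

lemma cos_sum_le (p M : ℕ) (hp : 2 ≤ p) (hM : M ≤ p) (β : ℝ) :
    ∑ i ∈ Finset.range M, Real.cos (β + 2*π*i/p) ≤ Real.sin (π*M/p)/Real.sin (π/p) := by
  have key : ∑ i ∈ Finset.range M, Real.cos (β + 2*π*i/p)
      = (Complex.exp ((β:ℂ) * Complex.I)
          * ∑ i ∈ Finset.range M, Complex.exp ((2*π*i/p : ℝ) * Complex.I)).re := by
    rw [Finset.mul_sum, Complex.re_sum]
    apply Finset.sum_congr rfl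
    intro i _
    rw [← Complex.exp_add]
    have : (β:ℂ) * Complex.I + ((2*π*i/p : ℝ):ℂ) * Complex.I
        = ((β + 2*π*i/p : ℝ) : ℂ) * Complex.I := by
      push_cast
      ring
    rw [this, Complex.exp_ofReal_mul_I_re]
  rw [key, ← geom_abs p M hp hM]
  calc (Complex.exp ((β:ℂ) * Complex.I) * ∑ i ∈ Finset.range M,
          Complex.exp ((2*π*i/p : ℝ) * Complex.I)).re
      ≤ ‖Complex.exp ((β:ℂ) * Complex.I) * ∑ i ∈ Finset.range M,
          Complex.exp ((2*π*i/p : ℝ) * Complex.I)‖ := Complex.re_le_norm _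
    _ = _ := by
        rw [norm_mul, Complex.norm_exp_ofReal_mul_I, one_mul]

lemma cos_lt_cos_iff (α x : ℝ) (h0 : 0 < α) (hπ : α ≤ π) :
    Real.cos α < Real.cos x ↔ ∃ j : ℤ, |x - 2*π*j| < α := by
  constructor
  · intro h
    refine ⟨round (x/(2*π)), ?_⟩
    set j := round (x/(2*π)) with hj
    have hb : |x/(2*π) - j| ≤ 1/2 := abs_sub_round _
    have hπ0 : (0:ℝ) < π := Real.pi_pos
    have hy : |x - 2*π*j| ≤ π := by
      have hrw : x - 2*π*j = (2*π) * (x/(2*π) - j) := by field_simp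
      rw [hrw, abs_mul, abs_of_pos (show (0:ℝ) < 2*π by linarith)]
      nlinarith
    by_contra hcon
    push_neg at hcon
    have hcx : Real.cos x = Real.cos |x - 2*π*j| := by
      rw [Real.cos_abs, show x - 2*π*(j:ℝ) = x + ((-j : ℤ):ℝ) * (2*π) by push_cast; ring,
        Real.cos_add_int_mul_two_pi]
    have : Real.cos |x - 2*π*j| ≤ Real.cos α := by
      apply Real.cos_le_cos_of_nonneg_of_le_pi (le_of_lt h0) hy hcon
    rw [hcx] at h
    linarith
  · rintro ⟨j, hj⟩
    have hcx : Real.cos x = Real.cos |x - 2*π*j| := by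
      rw [Real.cos_abs, show x - 2*π*(j:ℝ) = x + ((-j : ℤ):ℝ) * (2*π) by push_cast; ring,
        Real.cos_add_int_mul_two_pi]
    rw [hcx]
    exact Real.cos_lt_cos_of_nonneg_of_le_pi (abs_nonneg _) hπ hj

lemma sin_step (p k : ℕ) (hp : 2 ≤ p) (h2k : 2*k ≤ p) :
    ∀ d m : ℕ, m + d ≤ k →
      (d:ℝ) * (Real.cos (π*k/p) * Real.sin (π/p)) + Real.sin (π*m/p)
        ≤ Real.sin (π*(m+d)/p) := by
  have hp0 : (0:ℝ) < p := by positivity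
  have hπ : (0:ℝ) < π := Real.pi_pos
  have hp2 : (2:ℝ) ≤ p := by exact_mod_cast hp
  have h2k' : 2*(k:ℝ) ≤ p := by exact_mod_cast h2k
  have hstep : ∀ t : ℝ, 0 ≤ t → t + 1 ≤ k →
      Real.cos (π*k/p) * Real.sin (π/p) ≤ Real.sin (π*(t+1)/p) - Real.sin (π*t/p) := by
    intro t ht0 ht1
    have hdiff : Real.sin (π*(t+1)/p) - Real.sin (π*t/p)
        = 2 * Real.sin (π/(2*p)) * Real.cos (π*(2*t+1)/(2*p)) := by
      rw [Real.sin_sub_sin,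
        show (π*(t+1)/p - π*t/p)/2 = π/(2*p) by field_simp; ring,
        show (π*(t+1)/p + π*t/p)/2 = π*(2*t+1)/(2*p) by field_simp; ring]
    have hsin2 : Real.sin (π/p) = 2 * Real.sin (π/(2*p)) * Real.cos (π/(2*p)) := by
      rw [show π/(p:ℝ) = 2*(π/(2*p)) by field_simp, Real.sin_two_mul]
    have hcosk0 : 0 ≤ Real.cos (π*k/p) := by
      apply Real.cos_nonneg_of_mem_Icc
      constructor
      · have : (0:ℝ) ≤ π*k/p := by positivity
        linarith
      · rw [div_le_iff₀ hp0]; nlinarith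
    have hcos1 : Real.cos (π/(2*p)) ≤ 1 := Real.cos_le_one _
    have hccos : Real.cos (π*k/p) ≤ Real.cos (π*(2*t+1)/(2*p)) := by
      apply Real.cos_le_cos_of_nonneg_of_le_pi
      · positivity
      · rw [div_le_iff₀ hp0]
        have hkp : (k:ℝ) ≤ p := by linarith
        nlinarith
      · rw [div_le_div_iff₀ (by positivity) (by positivity)]
        nlinarith [mul_pos hπ hp0]
    have hs0 : 0 ≤ Real.sin (π/(2*p)) := by
      apply Real.sin_nonneg_of_nonneg_of_le_pi
      · positivity
      · rw [div_le_iff₀ (by positivity)]; nlinarith [hπ, hp2]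
    rw [hdiff, hsin2]
    have h1 : Real.cos (π*k/p) * Real.cos (π/(2*p)) ≤ Real.cos (π*(2*t+1)/(2*p)) := by
      nlinarith
    nlinarith [mul_le_mul_of_nonneg_left h1 hs0]
  intro d
  induction d with
  | zero => intro m hm; simp
  | succ d ih =>
    intro m hm
    have hm' : m + d ≤ k := by omega
    have ihm := ih m hm'
    have hj1 : ((m:ℝ) + d) + 1 ≤ k := by exact_mod_cast (show m + d + 1 ≤ k by omega)
    have hst := hstep ((m:ℝ) + d) (by positivity) hj1
    push_cast at ihm ⊢
    rw [show (m:ℝ)+((d:ℝ)+1) = ((m:ℝ)+(d:ℝ))+1 by ring]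
    linarith

lemma exp_re_cos (x t : ℝ) :
    (Complex.exp (((x:ℝ):ℂ) * Complex.I) * Complex.exp (((t:ℝ):ℂ)*Complex.I)).re
      = Real.cos (x + t) := by
  rw [← Complex.exp_add,
    show ((x:ℝ):ℂ) * Complex.I + ((t:ℝ):ℂ)*Complex.I = (((x+t : ℝ)):ℂ) * Complex.I by
      push_cast; ring,
    Complex.exp_ofReal_mul_I_re]

lemma main_ineq (p : ℕ) (hp : 2 ≤ p) (T : Finset (ZMod p))
    (hcard : (T.card : ℝ) ≤ (p:ℝ)/2) :
    ‖∑ m ∈ T, Complex.exp (((2*π*(m.val : ℝ)/p : ℝ) : ℂ) * Complex.I)‖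
      ≤ Real.sin (π * T.card / p) / Real.sin (π/p) := by
  classical
  haveI : NeZero p := ⟨by omega⟩
  have hp0 : (0:ℝ) < p := by positivity
  have hπ : (0:ℝ) < π := Real.pi_pos
  have hp2 : (2:ℝ) ≤ p := by exact_mod_cast hp
  set k := T.card with hk
  have hsin : 0 < Real.sin (π/p) := sin_p_pos p hp
  have hRHS : 0 ≤ Real.sin (π*k/p)/Real.sin (π/p) := by
    apply div_nonneg _ (le_of_lt hsin)
    apply Real.sin_nonneg_of_nonneg_of_le_pi
    · positivity
    · rw [div_le_iff₀ hp0]; nlinarith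
  set f := ∑ m ∈ T, Complex.exp (((2*π*(m.val : ℝ)/p : ℝ):ℂ) * Complex.I) with hf
  by_cases hf0 : f = 0
  · rw [hf0]
    simpa using hRHS
  have hk1 : 1 ≤ k := by
    rcases Finset.eq_empty_or_nonempty T with h | h
    · exfalso; apply hf0; rw [hf, h]; simp
    · exact Finset.card_pos.mpr h
  have h2k : 2*k ≤ p := by
    have h' : 2*(k:ℝ) ≤ p := by linarith
    exact_mod_cast h'
  have hkp : k < p := by omega
  have hkr : (k:ℝ) ≤ p := by linarith
  set φ : ℝ := -Complex.arg f with hφ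
  have h1 : f * Complex.exp ((φ:ℂ) * Complex.I) = (‖f‖ : ℂ) := by
    conv_lhs => rw [← Complex.norm_mul_exp_arg_mul_I f]
    rw [mul_assoc, ← Complex.exp_add,
      show (Complex.arg f : ℂ) * Complex.I + (φ:ℂ)*Complex.I = 0 by rw [hφ]; push_cast; ring,
      Complex.exp_zero, mul_one]
  set c : ℝ := -φ*(p:ℝ)/(2*π) with hc
  have habs : (‖f‖ : ℝ) = ∑ m ∈ T, Real.cos (2*π*((m.val:ℝ) - c)/p) := by
    have h2 := congrArg Complex.re h1
    rw [Complex.ofReal_re] at h2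
    rw [← h2, hf, Finset.sum_mul, Complex.re_sum]
    apply Finset.sum_congr rfl
    intro m _
    have hargm : 2*π*(m.val:ℝ)/p + φ = 2*π*((m.val:ℝ) - c)/p := by
      rw [hc]; field_simp; ring
    rw [exp_re_cos, hargm]
  set B : Finset (ZMod p) :=
    Finset.univ.filter
      (fun m => Real.cos (π*k/p) < Real.cos (2*π*((m.val:ℝ) - c)/p)) with hB
  -- step 1
  have step1 : ∑ m ∈ T, Real.cos (2*π*((m.val:ℝ) - c)/p)
      ≤ k * Real.cos (π*k/p)
        + ∑ m ∈ B, (Real.cos (2*π*((m.val:ℝ) - c)/p) - Real.cos (π*k/p)) := by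
    have e1 : ∑ m ∈ T, Real.cos (2*π*((m.val:ℝ) - c)/p)
        = ∑ m ∈ T, (Real.cos (2*π*((m.val:ℝ) - c)/p) - Real.cos (π*k/p))
          + k * Real.cos (π*k/p) := by
      rw [Finset.sum_sub_distrib, Finset.sum_const, ← hk, nsmul_eq_mul]
      ring
    have e2 : ∑ m ∈ T, (Real.cos (2*π*((m.val:ℝ) - c)/p) - Real.cos (π*k/p))
        ≤ ∑ m ∈ T, max (Real.cos (2*π*((m.val:ℝ) - c)/p) - Real.cos (π*k/p)) 0 :=
      Finset.sum_le_sum (fun m _ => le_max_left _ _)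
    have e3 : ∑ m ∈ T, max (Real.cos (2*π*((m.val:ℝ) - c)/p) - Real.cos (π*k/p)) 0
        ≤ ∑ m ∈ (Finset.univ : Finset (ZMod p)), max (Real.cos (2*π*((m.val:ℝ) - c)/p) - Real.cos (π*k/p)) 0 :=
      Finset.sum_le_sum_of_subset_of_nonneg (Finset.subset_univ T)
        (fun m _ _ => le_max_right _ _)
    have e4 : ∑ m ∈ (Finset.univ : Finset (ZMod p)), max (Real.cos (2*π*((m.val:ℝ) - c)/p) - Real.cos (π*k/p)) 0
        = ∑ m ∈ B, (Real.cos (2*π*((m.val:ℝ) - c)/p) - Real.cos (π*k/p)) := by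
      rw [← Finset.sum_filter_add_sum_filter_not Finset.univ
        (fun m => Real.cos (π*k/p) < Real.cos (2*π*((m.val:ℝ) - c)/p)), ← hB]
      have e5 : ∑ m ∈ B, max (Real.cos (2*π*((m.val:ℝ) - c)/p) - Real.cos (π*k/p)) 0
          = ∑ m ∈ B, (Real.cos (2*π*((m.val:ℝ) - c)/p) - Real.cos (π*k/p)) := by
        apply Finset.sum_congr rfl
        intro m hm
        rw [hB, Finset.mem_filter] at hm
        exact max_eq_left (by linarith [hm.2])
      have e6 : ∑ m ∈ (Finset.univ : Finset (ZMod p)).filter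
            (fun m => ¬ (Real.cos (π*k/p) < Real.cos (2*π*((m.val:ℝ) - c)/p))),
            max (Real.cos (2*π*((m.val:ℝ) - c)/p) - Real.cos (π*k/p)) 0 = 0 := by
        apply Finset.sum_eq_zero
        intro m hm
        rw [Finset.mem_filter] at hm
        push_neg at hm
        exact max_eq_right (by linarith [hm.2])
      rw [e5, e6, add_zero]
    linarith
  -- B structure
  have hπk0 : (0:ℝ) < π*k/p := by
    have hkpos : (0:ℝ) < (k:ℝ) := by exact_mod_cast hk1
    exact div_pos (mul_pos hπ hkpos) hp0
  have hπkπ : π*(k:ℝ)/p ≤ π := by rw [div_le_iff₀ hp0]; nlinarith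
  have hmemB : ∀ m : ZMod p, (m ∈ B ↔ ∃ j : ℤ, |(m.val:ℝ) - c - j*p| < (k:ℝ)/2) := by
    intro m
    rw [hB, Finset.mem_filter]
    simp only [Finset.mem_univ, true_and]
    rw [cos_lt_cos_iff _ _ hπk0 hπkπ]
    apply exists_congr
    intro j
    rw [show 2*π*((m.val:ℝ)-c)/p - 2*π*j = (2*π/p) * ((m.val:ℝ) - c - j*p) by
        field_simp,
      abs_mul, abs_of_pos (show (0:ℝ) < 2*π/p by positivity),
      show π*(k:ℝ)/p = (2*π/p) * ((k:ℝ)/2) by field_simp]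
    exact mul_lt_mul_iff_right₀ (by positivity)
  set n₀ : ℤ := ⌊c - (k:ℝ)/2⌋ + 1 with hn₀
  set Mz : ℤ := ⌈c + (k:ℝ)/2⌉ - n₀ with hMz
  set M : ℕ := Mz.toNat with hM
  set g : ℕ → ZMod p := fun i => ((n₀ + i : ℤ) : ZMod p) with hg
  have hceil : (⌈c + (k:ℝ)/2⌉ : ℝ) < c + (k:ℝ)/2 + 1 := Int.ceil_lt_add_one _
  have hfloor : c - (k:ℝ)/2 - 1 < (⌊c - (k:ℝ)/2⌋ : ℝ) := Int.sub_one_lt_floor _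
  have hMzk : Mz ≤ k := by
    have hr : ((Mz:ℤ):ℝ) < (k:ℝ) + 1 := by rw [hMz, hn₀]; push_cast; linarith
    have : Mz < (k:ℤ) + 1 := by exact_mod_cast hr
    omega
  have hMk : M ≤ k := by omega
  have hMp : M ≤ p := by omega
  have hBeq : B = (Finset.range M).image g := by
    ext m
    rw [hmemB m, Finset.mem_image]
    constructor
    · rintro ⟨j, hj⟩
      have hj' := abs_lt.mp hj
      set z : ℤ := (m.val : ℤ) - j*p with hz
      have hzr : (z:ℝ) = (m.val:ℝ) - j*p := by rw [hz]; push_cast; ring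
      have hlow : n₀ ≤ z := by
        rw [hn₀, Int.add_one_le_iff, Int.floor_lt, hzr]
        linarith [hj'.1]
      have hhigh : z < ⌈c + (k:ℝ)/2⌉ := by
        rw [Int.lt_ceil, hzr]
        linarith [hj'.2]
      refine ⟨(z - n₀).toNat, ?_, ?_⟩
      · rw [Finset.mem_range, hM, hMz]
        omega
      · rw [hg]
        show ((n₀ + ((z - n₀).toNat : ℤ) : ℤ) : ZMod p) = m
        rw [Int.toNat_of_nonneg (by omega), show n₀ + (z - n₀) = z by ring, hz]
        push_cast
        simp [ZMod.natCast_self, ZMod.natCast_val, ZMod.cast_id]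
    · rintro ⟨i, hi, rfl⟩
      rw [Finset.mem_range, hM] at hi
      set z : ℤ := n₀ + i with hz
      have hzlow : c - (k:ℝ)/2 < (z:ℝ) := by
        have hn₀r : ((n₀:ℤ):ℝ) = ((⌊c - (k:ℝ)/2⌋ : ℤ):ℝ) + 1 := by exact_mod_cast hn₀
        rw [hz]
        push_cast
        have h0i : (0:ℝ) ≤ (i:ℝ) := by positivity
        linarith
      have hzceil : z < ⌈c + (k:ℝ)/2⌉ := by rw [hz]; omega
      have hzhigh : (z:ℝ) < c + (k:ℝ)/2 := Int.lt_ceil.mp hzceil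
      refine ⟨-(z/p), ?_⟩
      have hval : (((g i).val : ℤ)) = z % p := by rw [hg]; exact ZMod.val_intCast _
      have hmod : (z % p : ℤ) = z - p * (z / p) := Int.emod_def z p
      have hvr : (((g i).val:ℝ)) = (z:ℝ) - (p:ℝ) * ((z/p : ℤ):ℝ) := by
        exact_mod_cast congrArg (fun t : ℤ => (t:ℝ)) (hval.trans hmod)
      rw [hvr]
      rw [show (z:ℝ) - (p:ℝ)*((z/p : ℤ):ℝ) - c - (-(z/p):ℤ)*(p:ℝ) = (z:ℝ) - c by push_cast; ring]
      rw [abs_lt]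
      constructor <;> linarith
  have hinj : ∀ i₁ ∈ Finset.range M, ∀ i₂ ∈ Finset.range M, g i₁ = g i₂ → i₁ = i₂ := by
    intro i₁ h₁ i₂ h₂ hgi
    rw [Finset.mem_range] at h₁ h₂
    rw [hg] at hgi
    have hmodeq : (n₀ + (i₁:ℤ)) ≡ (n₀ + (i₂:ℤ)) [ZMOD (p:ℕ)] :=
      (ZMod.intCast_eq_intCast_iff _ _ _).mp hgi
    have hdvd : ((p:ℕ):ℤ) ∣ (n₀ + (i₂:ℤ)) - (n₀ + (i₁:ℤ)) := Int.ModEq.dvd hmodeq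
    have habs : |(n₀ + (i₂:ℤ)) - (n₀ + (i₁:ℤ))| < ((p:ℕ):ℤ) := by
      rw [abs_lt]
      constructor <;> push_cast <;> omega
    have := Int.eq_zero_of_abs_lt_dvd hdvd habs
    omega
  have hcardB : B.card = M := by
    rw [hBeq, Finset.card_image_of_injOn
      (fun x hx y hy h => hinj x (by simpa using hx) y (by simpa using hy) h),
      Finset.card_range]
  have hsumB : ∑ m ∈ B, Real.cos (2*π*((m.val:ℝ) - c)/p)
      ≤ Real.sin (π*M/p)/Real.sin (π/p) := by
    rw [hBeq, Finset.sum_image hinj]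
    have hterm : ∀ i ∈ Finset.range M,
        Real.cos (2*π*(((g i).val:ℝ) - c)/p)
          = Real.cos (2*π*((n₀:ℝ) - c)/p + 2*π*(i:ℝ)/p) := by
      intro i _
      set z : ℤ := n₀ + i with hz
      have hval : (((g i).val : ℤ)) = z % p := by rw [hg]; exact ZMod.val_intCast _
      have hmod : (z % p : ℤ) = z - p * (z / p) := Int.emod_def z p
      have hvr : (((g i).val:ℝ)) = (z:ℝ) - (p:ℝ) * ((z/p : ℤ):ℝ) := by
        exact_mod_cast congrArg (fun t : ℤ => (t:ℝ)) (hval.trans hmod)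
      rw [hvr]
      rw [show 2*π*(((z:ℝ) - (p:ℝ)*((z/p : ℤ):ℝ)) - c)/p
          = (2*π*((n₀:ℝ) - c)/p + 2*π*(i:ℝ)/p) + ((-(z/p) : ℤ):ℝ)*(2*π) by
        rw [hz]; push_cast; field_simp; ring]
      exact Real.cos_add_int_mul_two_pi _ _
    rw [Finset.sum_congr rfl hterm]
    exact cos_sum_le p M hp hMp _
  -- final combination
  have hstep := sin_step p k hp h2k (k - M) M (by omega)
  rw [Nat.cast_sub hMk] at hstep
  rw [show (M:ℝ) + ((k:ℝ) - M) = (k:ℝ) by ring] at hstep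
  have hgoal : ‖f‖ ≤ Real.sin (π*(k:ℝ)/p)/Real.sin (π/p) := by
    have hq : ((k:ℝ)*Real.cos (π*k/p) - M*Real.cos (π*k/p) + Real.sin (π*M/p)/Real.sin (π/p))
        = (((k:ℝ)-M) * (Real.cos (π*k/p) * Real.sin (π/p)) + Real.sin (π*M/p))/Real.sin (π/p) := by
      field_simp
    have h2 : (((k:ℝ)-M) * (Real.cos (π*k/p) * Real.sin (π/p)) + Real.sin (π*M/p))/Real.sin (π/p)
        ≤ Real.sin (π*k/p) / Real.sin (π/p) := by
      apply (div_le_div_iff_of_pos_right hsin).mpr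
      exact hstep
    have h3 : (∑ m ∈ B, (Real.cos (2*π*((m.val:ℝ) - c)/p) - Real.cos (π*k/p)))
        = (∑ m ∈ B, Real.cos (2*π*((m.val:ℝ) - c)/p)) - M * Real.cos (π*k/p) := by
      rw [Finset.sum_sub_distrib, Finset.sum_const, hcardB, nsmul_eq_mul]
    calc ‖f‖ = ∑ m ∈ T, Real.cos (2*π*((m.val:ℝ) - c)/p) := habs
      _ ≤ k * Real.cos (π*k/p)
          + ∑ m ∈ B, (Real.cos (2*π*((m.val:ℝ) - c)/p) - Real.cos (π*k/p)) := step1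
      _ = (k:ℝ)*Real.cos (π*k/p) - M*Real.cos (π*k/p)
          + ∑ m ∈ B, Real.cos (2*π*((m.val:ℝ) - c)/p) := by rw [h3]; ring
      _ ≤ (k:ℝ)*Real.cos (π*k/p) - M*Real.cos (π*k/p) + Real.sin (π*M/p)/Real.sin (π/p) := by
          linarith [hsumB]
      _ = _ := hq
      _ ≤ _ := h2
  exact hgoal


lemma exp_mod (p : ℕ) (hp : 0 < p) (x : ℕ) :
    Complex.exp (((2*π*(x:ℝ)/p :ℝ):ℂ) * Complex.I)
      = Complex.exp (((2*π*((x % p : ℕ):ℝ)/p :ℝ):ℂ) * Complex.I) := by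
  have hp0 : (p:ℝ) ≠ 0 := by positivity
  obtain ⟨q, hq⟩ : ∃ q : ℕ, x = x % p + q * p := ⟨x / p, (Nat.mod_add_div' x p).symm⟩
  have hxr : (x:ℝ) = ((x % p : ℕ):ℝ) + (q:ℝ)*p := by exact_mod_cast hq
  have hsplit : (2*π*(x:ℝ)/p :ℝ) = 2*π*((x % p : ℕ):ℝ)/p + 2*π*q := by
    rw [hxr]; field_simp
  have h2 : ((2*π*(x:ℝ)/p :ℝ):ℂ) * Complex.I
      = ((2*π*((x % p : ℕ):ℝ)/p :ℝ):ℂ) * Complex.I + ((q:ℤ):ℂ) * (2*(π:ℂ)*Complex.I) := by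
    rw [hsplit]
    push_cast
    ring
  rw [h2, Complex.exp_add, Complex.exp_int_mul_two_pi_mul_I, mul_one]

/-- Fourier transform of the indicator of `S ⊆ ℤ/p`:
`Ŝ(a) = ∑_{n ∈ S} e^{2πi a n / p}`. -/
noncomputable def ftSet (p : ℕ) (S : Finset (ZMod p)) (a : ZMod p) : ℂ :=
  ∑ n ∈ S, Complex.exp (2 * Real.pi * Complex.I * (a.val : ℂ) * (n.val : ℂ) / (p : ℂ))

lemma term_eq (p : ℕ) [NeZero p] (a n : ZMod p) :
    Complex.exp (2 * (π:ℂ) * Complex.I * (a.val : ℂ) * (n.val : ℂ) / (p : ℂ))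
      = Complex.exp (((2*π*(((a*n).val : ℕ):ℝ)/p : ℝ):ℂ) * Complex.I) := by
  rw [ZMod.val_mul, ← exp_mod p (NeZero.pos p) (a.val * n.val)]
  congr 1
  push_cast
  ring

theorem fourier_coefficient_max_of_set (p : ℕ) (hp : p.Prime)
    (S : Finset (ZMod p)) (hS : S.Nonempty) (hcard : (S.card : ℝ) ≤ (p : ℝ) / 2)
    (a : ZMod p) (ha : a ≠ 0) :
    ‖ftSet p S a‖ ≤
      Real.sin (Real.pi * S.card / p) / Real.sin (Real.pi / p) ∧
    ((∃ s₀ : ZMod p, S = (Finset.range S.card).image (fun j : ℕ => s₀ + (j : ZMod p) * a⁻¹)) →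
      ‖ftSet p S a‖ =
        Real.sin (Real.pi * S.card / p) / Real.sin (Real.pi / p)) := by
  classical
  haveI : Fact p.Prime := ⟨hp⟩
  have hp2 : 2 ≤ p := hp.two_le
  haveI : NeZero p := ⟨by omega⟩
  have hp0 : (0:ℝ) < p := by positivity
  have hk1 : 1 ≤ S.card := Finset.card_pos.mpr hS
  have h2k : 2 * S.card ≤ p := by
    have h' : 2*(S.card:ℝ) ≤ p := by linarith
    exact_mod_cast h'
  have hkp : S.card < p := by omega
  constructor
  · -- inequality
    have hmulinj : ∀ x ∈ S, ∀ y ∈ S, a*x = a*y → x = y :=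
      fun x _ y _ h => mul_left_cancel₀ ha h
    have hft : ftSet p S a
        = ∑ m ∈ S.image (fun n => a*n),
            Complex.exp (((2*π*(m.val:ℝ)/p :ℝ):ℂ) * Complex.I) := by
      rw [ftSet, Finset.sum_image hmulinj]
      exact Finset.sum_congr rfl (fun n _ => term_eq p a n)
    have hcardT : (S.image (fun n => a*n)).card = S.card :=
      Finset.card_image_of_injOn (fun x hx y hy h => hmulinj x hx y hy h)
    have := main_ineq p hp2 (S.image (fun n => a*n)) (by rw [hcardT]; exact hcard)
    rw [hcardT] at this
    rw [hft]
    exact this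
  · -- equality case
    rintro ⟨s₀, hS₀⟩
    set k := S.card with hk
    have hginj : ∀ j₁ ∈ Finset.range k, ∀ j₂ ∈ Finset.range k,
        s₀ + (j₁:ZMod p)*a⁻¹ = s₀ + (j₂:ZMod p)*a⁻¹ → j₁ = j₂ := by
      intro j₁ h₁ j₂ h₂ h
      rw [Finset.mem_range] at h₁ h₂
      have h3 : (j₁ : ZMod p) = j₂ := by
        have h4 := add_left_cancel h
        exact mul_right_cancel₀ (inv_ne_zero ha) h4
      have h5 := (ZMod.natCast_eq_natCast_iff j₁ j₂ p).mp h3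
      have h6 : j₁ % p = j₂ % p := h5
      rw [Nat.mod_eq_of_lt (by omega), Nat.mod_eq_of_lt (by omega)] at h6
      exact h6
    have hfs : ftSet p S a
        = Complex.exp (((2*π*(((a*s₀).val:ℕ):ℝ)/p :ℝ):ℂ) * Complex.I)
          * ∑ j ∈ Finset.range k, Complex.exp (((2*π*(j:ℝ)/p :ℝ):ℂ) * Complex.I) := by
      rw [ftSet, hS₀, Finset.sum_image hginj, Finset.mul_sum]
      apply Finset.sum_congr rfl
      intro j hj
      rw [Finset.mem_range] at hj
      rw [term_eq p a (s₀ + (j:ZMod p)*a⁻¹)]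
      have hmul : a * (s₀ + (j:ZMod p)*a⁻¹) = a*s₀ + (j:ZMod p) := by
        field_simp
      rw [hmul]
      have hval : ((a*s₀ + (j:ZMod p)).val) = ((a*s₀).val + j) % p := by
        rw [ZMod.val_add, ZMod.val_natCast]
        conv_rhs => rw [Nat.add_mod, Nat.mod_eq_of_lt (ZMod.val_lt _)]
      rw [hval, ← exp_mod p (by omega) ((a*s₀).val + j), ← Complex.exp_add]
      congr 1
      push_cast
      have hpne : (p:ℂ) ≠ 0 := by exact_mod_cast (show ((p:ℕ):ℂ) ≠ 0 by exact_mod_cast (by positivity : (p:ℝ) ≠ 0))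
      field_simp
    rw [hfs, norm_mul, Complex.norm_exp_ofReal_mul_I, one_mul]
    exact geom_abs p k hp2 (by omega)
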